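/- arXiv:1110.3343 — 5 statements merged into one kernel-verified Lean document; each statement's English description precedes it below -/
import Mathlib

section
/- Let f, U : (0,∞) → (0,∞) be functions with f(t) ≤ U(t) for all t > 0, and suppose f is log-convex. Let 0 < α < 1, 0 < s < 1 and t > 0, and let p := s(1−α)/(1−αs) (equivalently, p is the unique solution of p + (1−p)αs = s). Then f(ts) ≤ U(αts)^{1−p} · U(t)^p · (f(t)/U(t))^p. -/
/-- **Davies' interpolation lemma** (abstract real-variable form).
If `f, U : (0,∞) → (0,∞)` satisfy `f ≤ U`, `f` is log-convex, `0 < α < 1`,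
`0 < s < 1`, `t > 0` and `p := s(1−α)/(1−αs)`, then
`f(ts) ≤ U(αts)^{1−p} · U(t)^p · (f(t)/U(t))^p`. -/
theorem davies_interpolation
    (f U : ℝ → ℝ)
    (hf_pos : ∀ t : ℝ, 0 < t → 0 < f t)
    (hU_pos : ∀ t : ℝ, 0 < t → 0 < U t)
    (hfU : ∀ t : ℝ, 0 < t → f t ≤ U t)
    (hf_logconvex : ∀ a b : ℝ, 0 < a → 0 < b → ∀ l : ℝ, 0 ≤ l → l ≤ 1 →
      f (l * a + (1 - l) * b) ≤ f a ^ l * f b ^ (1 - l))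
    (α s t : ℝ) (hα0 : 0 < α) (hα1 : α < 1) (hs0 : 0 < s) (hs1 : s < 1) (ht : 0 < t)
    (p : ℝ) (hp : p = s * (1 - α) / (1 - α * s)) :
    f (t * s) ≤ U (α * t * s) ^ (1 - p) * U t ^ p * (f t / U t) ^ p := by
  have hden : 0 < 1 - α * s := by nlinarith
  have hp0 : 0 < p := by
    rw [hp]; apply div_pos _ hden; nlinarith
  have hp1 : p < 1 := by
    rw [hp, div_lt_one hden]; nlinarith
  have hats : 0 < α * t * s := by positivity
  have key : (1 - p) * (α * t * s) + (1 - (1 - p)) * t = t * s := by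
    rw [hp, div_eq_mul_inv]; linear_combination t * s * (1 - α) * mul_inv_cancel₀ hden.ne'
  have h1 := hf_logconvex (α * t * s) t hats ht (1 - p) (by linarith) (by linarith)
  rw [key] at h1
  have hep : 1 - (1 - p) = p := by ring
  rw [hep] at h1
  have h2 : f (α * t * s) ^ (1 - p) * f t ^ p ≤ U (α * t * s) ^ (1 - p) * f t ^ p := by
    exact mul_le_mul_of_nonneg_right
      (Real.rpow_le_rpow (hf_pos _ hats).le (hfU _ hats) (by linarith))
      (Real.rpow_nonneg (hf_pos t ht).le p)
  have h3 : U t ^ p * (f t / U t) ^ p = f t ^ p := by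
    rw [← Real.mul_rpow (hU_pos t ht).le (div_nonneg (hf_pos t ht).le (hU_pos t ht).le)]
    rw [mul_div_cancel₀ _ (hU_pos t ht).ne']
  calc f (t * s) ≤ f (α * t * s) ^ (1 - p) * f t ^ p := h1
    _ ≤ U (α * t * s) ^ (1 - p) * f t ^ p := h2
    _ = U (α * t * s) ^ (1 - p) * (U t ^ p * (f t / U t) ^ p) := by rw [h3]
    _ = U (α * t * s) ^ (1 - p) * U t ^ p * (f t / U t) ^ p := by ring
end

section
/- Let H be a complex Hilbert space and A : H → H a bounded self-adjoint operator which is coercive, i.e. there is ε > 0 with Re⟨Ag, g⟩ ≥ ε‖g‖² for all g ∈ H. Then A is invertible, and for every ω ∈ H, Re⟨A^{−1}ω, ω⟩ = sup over all g ∈ H with g ≠ 0 of |⟨g, ω⟩|² / Re⟨Ag, g⟩. -/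
open scoped ComplexInnerProductSpace

/-- Cauchy–Schwarz for the nonnegative sesquilinear form `⟪A·,·⟫` of a symmetric operator. -/
private lemma green_cs_aux {H : Type*} [NormedAddCommGroup H] [InnerProductSpace ℂ H]
    (A : H →L[ℂ] H) (hsym : ∀ x y : H, ⟪A x, y⟫ = ⟪x, A y⟫)
    (hnn : ∀ g : H, 0 ≤ (⟪A g, g⟫).re) (g u : H) :
    ‖⟪A g, u⟫‖ ^ 2 ≤ (⟪A g, g⟫).re * (⟪A u, u⟫).re := by
  set z := ⟪A g, u⟫ with hz
  by_cases h0 : z = 0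
  · rw [h0]
    simpa using mul_nonneg (hnn g) (hnn u)
  · have hznorm : (0 : ℝ) < ‖z‖ := norm_pos_iff.mpr h0
    set a := (⟪A g, g⟫).re with ha
    set b := (⟪A u, u⟫).re with hb
    have key : ∀ t : ℝ, 0 ≤ b * (t * t) + (-(2 * ‖z‖)) * t + a := by
      intro t
      set c : ℂ := -(t : ℂ) * (starRingEnd ℂ z) / (‖z‖ : ℂ) with hc
      have hexp : ⟪A (g + c • u), g + c • u⟫
          = ⟪A g, g⟫ + c * z + (starRingEnd ℂ) (c * z) + (starRingEnd ℂ) c * c * ⟪A u, u⟫ := by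
        have h1 : ⟪A u, g⟫ = (starRingEnd ℂ) z := by
          rw [hz, hsym u g, ← inner_conj_symm, hsym g u]
        simp only [map_add, map_smul, inner_add_left, inner_add_right, inner_smul_left,
          inner_smul_right, h1, ← hz, map_mul]
        ring
      have hzC : (‖z‖ : ℂ) ≠ 0 := by exact_mod_cast hznorm.ne'
      have hcz : c * z = (-(t * ‖z‖) : ℝ) := by
        have hzz : (starRingEnd ℂ) z * z = (‖z‖ : ℂ) ^ 2 := RCLike.conj_mul z
        rw [hc, div_mul_eq_mul_div, mul_assoc, hzz, div_eq_iff hzC]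
        push_cast
        ring
      have hcc : (starRingEnd ℂ) c * c = ((t * t : ℝ) : ℂ) := by
        have hnc : ‖c‖ = |t| := by
          rw [hc, norm_div, norm_mul, norm_neg, Complex.norm_real, Complex.norm_real,
            RCLike.norm_conj, Real.norm_eq_abs, Real.norm_eq_abs, abs_of_nonneg (norm_nonneg z),
            mul_div_assoc, div_self hznorm.ne', mul_one]
        rw [RCLike.conj_mul, hnc]
        have habs : |t| ^ 2 = t * t := by rw [sq_abs]; ring
        rw [← habs]
        norm_cast
      have hre : (⟪A (g + c • u), g + c • u⟫).re
          = b * (t * t) + (-(2 * ‖z‖)) * t + a := by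
        rw [hexp, hcz, hcc]
        simp only [Complex.add_re, Complex.re_ofReal_mul, Complex.conj_re, Complex.ofReal_re,
          Complex.ofReal_neg, Complex.neg_re, ← ha, ← hb]
        ring
      rw [← hre]
      exact hnn _
    have hdis := discrim_le_zero key
    rw [discrim] at hdis
    nlinarith [hdis]

/-- **Variational formula for the Green function** (abstract form).
If `A` is a bounded self-adjoint coercive operator on a complex Hilbert space, then `A`
is invertible and `Re⟨A⁻¹ω, ω⟩ = sup_{g ≠ 0} |⟨g, ω⟩|² / Re⟨Ag, g⟩` for every `ω`. -/
theorem green_variational_formula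
    {H : Type*} [NormedAddCommGroup H] [InnerProductSpace ℂ H] [CompleteSpace H]
    (A : H →L[ℂ] H) (hA : IsSelfAdjoint A)
    (hcoercive : ∃ ε : ℝ, 0 < ε ∧ ∀ g : H, ε * ‖g‖ ^ 2 ≤ (⟪A g, g⟫).re) :
    ∃ B : H →L[ℂ] H, A.comp B = ContinuousLinearMap.id ℂ H ∧
      B.comp A = ContinuousLinearMap.id ℂ H ∧
      ∀ ω : H, (⟪B ω, ω⟫).re
        = ⨆ g : {g : H // g ≠ 0}, ‖⟪(g : H), ω⟫‖ ^ 2 / (⟪A (g : H), (g : H)⟫).re := by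
  obtain ⟨ε, hε, hco⟩ := hcoercive
  have hsym : ∀ x y : H, ⟪A x, y⟫ = ⟪x, A y⟫ := by
    intro x y
    conv_lhs => rw [← hA.adjoint_eq]
    exact ContinuousLinearMap.adjoint_inner_left A y x
  have hnn : ∀ g : H, 0 ≤ (⟪A g, g⟫).re := fun g =>
    le_trans (by positivity) (hco g)
  have hpos : ∀ g : H, g ≠ 0 → 0 < (⟪A g, g⟫).re := by
    intro g hg
    have : (0 : ℝ) < ε * ‖g‖ ^ 2 := by
      have : (0:ℝ) < ‖g‖ := norm_pos_iff.mpr hg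
      positivity
    exact lt_of_lt_of_le this (hco g)
  -- antilipschitz bound
  have hbound : ∀ x : H, ‖x‖ ≤ (⟨ε, hε.le⟩ : NNReal)⁻¹ * ‖A x‖ := by
    intro x
    by_cases hx : x = 0
    · simp [hx]
    · have hxn : (0:ℝ) < ‖x‖ := norm_pos_iff.mpr hx
      have h1 : ε * ‖x‖ ^ 2 ≤ ‖A x‖ * ‖x‖ := by
        refine le_trans (hco x) ?_
        calc (⟪A x, x⟫).re ≤ ‖⟪A x, x⟫‖ := by
              exact Complex.re_le_norm _
          _ ≤ ‖A x‖ * ‖x‖ := norm_inner_le_norm _ _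
      have h2 : ε * ‖x‖ ≤ ‖A x‖ := by nlinarith
      have h3 := mul_le_mul_of_nonneg_left h2 (le_of_lt (inv_pos.mpr hε))
      rw [← mul_assoc, inv_mul_cancel₀ hε.ne', one_mul] at h3
      simpa using h3
  have hanti := A.antilipschitz_of_bound hbound
  have hker : LinearMap.ker (A : H →ₗ[ℂ] H) = ⊥ :=
    LinearMap.ker_eq_bot_of_injective (f := (A : H →ₗ[ℂ] H)) hanti.injective
  have hclosed : IsClosed (Set.range A) := hanti.isClosed_range A.uniformContinuous
  have hrange : LinearMap.range (A : H →ₗ[ℂ] H) = ⊤ := by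
    set K : Submodule ℂ H := LinearMap.range (A : H →ₗ[ℂ] H) with hK
    have hKclosed : IsClosed (K : Set H) := by
      rw [hK]
      exact hclosed
    haveI : CompleteSpace K := hKclosed.completeSpace_coe
    rw [← Submodule.orthogonal_eq_bot_iff (K := K)]
    rw [Submodule.eq_bot_iff]
    intro x hx
    rw [Submodule.mem_orthogonal] at hx
    have h0 : ⟪A x, x⟫ = 0 := hx (A x) (LinearMap.mem_range_self _ x)
    have : ε * ‖x‖ ^ 2 ≤ 0 := by
      rw [← Complex.zero_re, ← h0]
      exact hco x
    have hx2 : ‖x‖ ^ 2 ≤ 0 := by nlinarith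
    have hx3 : ‖x‖ ^ 2 = 0 := le_antisymm hx2 (sq_nonneg _)
    exact norm_eq_zero.mp ((pow_eq_zero_iff (two_ne_zero)).mp hx3)
  set e := ContinuousLinearEquiv.ofBijective A hker hrange with he
  have hecoe : ⇑e = ⇑A := ContinuousLinearEquiv.coeFn_ofBijective A hker hrange
  refine ⟨(e.symm : H →L[ℂ] H), ?_, ?_, ?_⟩
  · ext x
    simp only [ContinuousLinearMap.coe_comp', Function.comp_apply,
      ContinuousLinearEquiv.coe_coe, ContinuousLinearMap.id_apply]
    calc A (e.symm x) = e (e.symm x) := by rw [hecoe]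
      _ = x := e.apply_symm_apply x
  · ext x
    simp only [ContinuousLinearMap.coe_comp', Function.comp_apply,
      ContinuousLinearEquiv.coe_coe, ContinuousLinearMap.id_apply]
    calc e.symm (A x) = e.symm (e x) := by rw [hecoe]
      _ = x := e.symm_apply_apply x
  · intro ω
    set u : H := e.symm ω with hu
    have hAu : A u = ω := by
      calc A u = e (e.symm ω) := by rw [hu, hecoe]
        _ = ω := e.apply_symm_apply ω
    simp only [ContinuousLinearEquiv.coe_coe, ← hu]
    -- LHS equals Re ⟪A u, u⟫
    have hLHS : (⟪u, ω⟫).re = (⟪A u, u⟫).re := by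
      rw [← hAu, ← inner_conj_symm u (A u)]
      exact Complex.conj_re _
    by_cases hu0 : u = 0
    · have hω : ω = 0 := by rw [← hAu, hu0, map_zero]
      rw [hω]
      simp only [inner_zero_right, Complex.zero_re, norm_zero]
      rcases isEmpty_or_nonempty {g : H // g ≠ 0} with hE | hNE
      · rw [Real.iSup_of_isEmpty]
      · have h1 : (fun g : {g : H // g ≠ 0} => (0:ℝ) ^ 2 / (⟪A (g : H), (g : H)⟫).re)
            = fun _ => (0 : ℝ) := funext fun g => by norm_num
        calc (0:ℝ) = ⨆ _ : {g : H // g ≠ 0}, (0:ℝ) := ciSup_const.symm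
          _ = _ := congrArg iSup h1.symm
    · -- the general upper bound on each term
      have hterm : ∀ g : H, g ≠ 0 →
          ‖⟪g, ω⟫‖ ^ 2 / (⟪A g, g⟫).re ≤ (⟪A u, u⟫).re := by
        intro g hg
        rw [div_le_iff₀ (hpos g hg)]
        have hinner : ⟪g, ω⟫ = ⟪A g, u⟫ := by rw [← hAu, hsym]
        rw [hinner]
        calc ‖⟪A g, u⟫‖ ^ 2 ≤ (⟪A g, g⟫).re * (⟪A u, u⟫).re :=
              green_cs_aux A hsym hnn g u
          _ = (⟪A u, u⟫).re * (⟪A g, g⟫).re := mul_comm _ _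
      haveI : Nonempty {g : H // g ≠ 0} := ⟨⟨u, hu0⟩⟩
      rw [hLHS]
      apply le_antisymm
      · -- value at g = u attains the sup
        have hval : ‖⟪u, ω⟫‖ ^ 2 / (⟪A u, u⟫).re = (⟪A u, u⟫).re := by
          have hreal : ⟪A u, u⟫ = ((⟪A u, u⟫).re : ℂ) := by
            have hconj : (starRingEnd ℂ) ⟪A u, u⟫ = ⟪A u, u⟫ := by
              rw [inner_conj_symm, hsym]
            rw [Complex.conj_eq_iff_re] at hconj
            exact hconj.symm
          have hn : ‖⟪u, ω⟫‖ = (⟪A u, u⟫).re := by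
            rw [← hAu, ← inner_conj_symm u (A u)]
            rw [RCLike.norm_conj]
            rw [hreal, Complex.norm_real]
            exact abs_of_pos (hpos u hu0)
          rw [hn]
          field_simp [(hpos u hu0).ne']
        have hb : BddAbove (Set.range fun g : {g : H // g ≠ 0} =>
            ‖⟪(g : H), ω⟫‖ ^ 2 / (⟪A (g : H), (g : H)⟫).re) := by
          refine ⟨(⟪A u, u⟫).re, ?_⟩
          rintro x ⟨g, rfl⟩
          exact hterm g g.2
        calc (⟪A u, u⟫).re = ‖⟪u, ω⟫‖ ^ 2 / (⟪A u, u⟫).re := hval.symm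
          _ ≤ _ := le_ciSup hb ⟨u, hu0⟩
      · exact ciSup_le fun g => hterm g g.2
end

section
/- For every A > 0, B > 0 and θ ∈ (0,1) there exists a constant c > 0 with the following property: for every T > 0 and every nonincreasing, log-convex function f : (0,∞) → (0,∞) satisfying f(t) ≤ A t^{−θ} for all 0 < t ≤ T and ∫₀^∞ e^{−s} f(Ts) ds ≥ B T^{−θ}, one has f(T) ≥ c T^{−θ}. -/
open MeasureTheory

set_option maxHeartbeats 1000000

/-- **Short-time heat kernel lower bound** (abstract Tauberian form).
For every `A, B > 0` and `θ ∈ (0,1)` there is `c > 0` such that every positive,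
nonincreasing, log-convex `f : (0,∞) → (0,∞)` with `f(t) ≤ A t^{−θ}` for `0 < t ≤ T`
and `∫₀^∞ e^{−s} f(Ts) ds ≥ B T^{−θ}` satisfies `f(T) ≥ c T^{−θ}`. -/
theorem short_time_lower_bound
    (A B θ : ℝ) (hA : 0 < A) (hB : 0 < B) (hθ0 : 0 < θ) (hθ1 : θ < 1) :
    ∃ c : ℝ, 0 < c ∧
      ∀ (T : ℝ) (f : ℝ → ℝ), 0 < T →
        (∀ t : ℝ, 0 < t → 0 < f t) →
        (∀ a b : ℝ, 0 < a → a ≤ b → f b ≤ f a) →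
        (∀ a b : ℝ, 0 < a → 0 < b → ∀ l : ℝ, 0 ≤ l → l ≤ 1 →
          f (l * a + (1 - l) * b) ≤ f a ^ l * f b ^ (1 - l)) →
        (∀ t : ℝ, 0 < t → t ≤ T → f t ≤ A * t ^ (-θ)) →
        (B * T ^ (-θ) ≤ ∫ s in Set.Ioi (0 : ℝ), Real.exp (-s) * f (T * s)) →
        c * T ^ (-θ) ≤ f T := by
  have hθ' : (0:ℝ) < 1 - θ := by linarith
  set x : ℝ := B * (1 - θ) / (4 * A) with hx
  have hxpos : 0 < x := div_pos (mul_pos hB hθ') (by linarith)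
  set δ : ℝ := min (1/2) (x ^ ((1 - θ)⁻¹)) with hδ
  have hδpos : 0 < δ := lt_min (by norm_num) (Real.rpow_pos_of_pos hxpos _)
  have hδhalf : δ ≤ 1/2 := min_le_left _ _
  have hδ1 : δ ≤ 1 := hδhalf.trans (by norm_num)
  have hδpow : δ ^ (1 - θ) ≤ x := by
    calc δ ^ (1 - θ) ≤ (x ^ ((1 - θ)⁻¹)) ^ (1 - θ) :=
          Real.rpow_le_rpow hδpos.le (min_le_right _ _) hθ'.le
      _ = x := by
          rw [← Real.rpow_mul hxpos.le, inv_mul_cancel₀ hθ'.ne', Real.rpow_one]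
  have hpiece1 : A * (δ ^ (1 - θ) / (1 - θ)) ≤ B / 4 := by
    have h1 : A * δ ^ (1 - θ) ≤ A * x := mul_le_mul_of_nonneg_left hδpow hA.le
    have h2 : A * x = B * (1 - θ) / 4 := by
      rw [hx]; field_simp
    calc A * (δ ^ (1 - θ) / (1 - θ)) = A * δ ^ (1 - θ) / (1 - θ) := by ring
      _ ≤ A * x / (1 - θ) := (div_le_div_iff_of_pos_right hθ').2 h1
      _ = B / 4 := by rw [h2]; field_simp
  set l : ℝ := 1 / (1 + δ) with hl
  have hlpos : 0 < l := by positivity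
  have hl1 : l < 1 := by
    rw [hl, div_lt_one (by linarith)]; linarith
  have h1l : 0 < 1 - l := by linarith
  set K : ℝ := (A * (δ ^ (-θ) * δ ^ (-θ))) ^ l with hK
  have hKpos : 0 < K := Real.rpow_pos_of_pos (by positivity) _
  set c : ℝ := min 1 ((3 * B / (4 * (K + 1))) ^ ((1 - l)⁻¹)) with hc
  have hcpos : 0 < c := lt_min one_pos (Real.rpow_pos_of_pos (by positivity) _)
  refine ⟨c, hcpos, ?_⟩
  intro T f hT hfpos hmono hlog hupper hG
  have hTθ : 0 < T ^ θ := Real.rpow_pos_of_pos hT _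
  have hTθ' : 0 < T ^ (-θ) := Real.rpow_pos_of_pos hT _
  have hTT' : T ^ θ * T ^ (-θ) = 1 := by
    rw [← Real.rpow_add hT]; simp
  set F : ℝ → ℝ := fun s => Real.exp (-s) * f (T * s) with hF
  -- integrability
  have hInt : IntegrableOn F (Set.Ioi (0:ℝ)) := by
    by_contra h
    rw [integral_undef h] at hG
    have := mul_pos hB hTθ'
    linarith
  have hIntA : IntegrableOn F (Set.Ioc (0:ℝ) δ) :=
    hInt.mono_set Set.Ioc_subset_Ioi_self
  have hIntB : IntegrableOn F (Set.Ioc δ 1) :=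
    hInt.mono_set (fun s hs => Set.mem_Ioi.2 (lt_trans hδpos hs.1))
  have hIntC : IntegrableOn F (Set.Ioi (1:ℝ)) :=
    hInt.mono_set (fun s hs => Set.mem_Ioi.2 (lt_trans one_pos hs))
  -- split the integral
  have hsplit : ∫ s in Set.Ioi (0:ℝ), F s
      = (∫ s in Set.Ioc (0:ℝ) δ, F s) + (∫ s in Set.Ioc δ 1, F s)
        + (∫ s in Set.Ioi (1:ℝ), F s) := by
    have e1 : Set.Ioc (0:ℝ) δ ∪ Set.Ioc δ 1 = Set.Ioc 0 1 :=
      Set.Ioc_union_Ioc_eq_Ioc hδpos.le hδ1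
    have e2 : Set.Ioc (0:ℝ) 1 ∪ Set.Ioi 1 = Set.Ioi 0 :=
      Set.Ioc_union_Ioi_eq_Ioi zero_le_one
    rw [← e2, setIntegral_union Set.Ioc_disjoint_Ioi_same measurableSet_Ioi
      (by rw [← e1]; exact hIntA.union hIntB) hIntC, ← e1,
      setIntegral_union (Set.Ioc_disjoint_Ioc_of_le le_rfl) measurableSet_Ioc hIntA hIntB]
  -- bound piece 1
  have hb1 : (∫ s in Set.Ioc (0:ℝ) δ, F s) ≤ B / 4 * T ^ (-θ) := by
    have hIntG : IntegrableOn (fun s : ℝ => A * T ^ (-θ) * s ^ (-θ))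
        (Set.Ioc (0:ℝ) δ) := by
      have hbase : IntegrableOn (fun s : ℝ => s ^ (-θ)) (Set.Ioc (0:ℝ) δ) := by
        rw [← intervalIntegrable_iff_integrableOn_Ioc_of_le hδpos.le]
        exact intervalIntegral.intervalIntegrable_rpow' (by linarith)
      exact hbase.const_mul _
    have hcomp : (∫ s in Set.Ioc (0:ℝ) δ, F s)
        ≤ ∫ s in Set.Ioc (0:ℝ) δ, A * T ^ (-θ) * s ^ (-θ) := by
      refine setIntegral_mono_on hIntA hIntG measurableSet_Ioc ?_
      intro s hs
      have hs0 : 0 < s := hs.1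
      have hTs : 0 < T * s := mul_pos hT hs0
      have he : Real.exp (-s) ≤ 1 := Real.exp_le_one_iff.2 (by linarith)
      have h1 : F s ≤ f (T * s) := by
        simp only [hF]
        calc Real.exp (-s) * f (T * s) ≤ 1 * f (T * s) :=
              mul_le_mul_of_nonneg_right he (hfpos (T * s) hTs).le
          _ = f (T * s) := one_mul _
      have hsle : T * s ≤ T := by
        calc T * s ≤ T * 1 := mul_le_mul_of_nonneg_left (hs.2.trans hδ1) hT.le
          _ = T := mul_one T
      have h2 : f (T * s) ≤ A * (T * s) ^ (-θ) := hupper (T * s) hTs hsle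
      have h3 : (T * s) ^ (-θ) = T ^ (-θ) * s ^ (-θ) :=
        Real.mul_rpow hT.le hs0.le
      calc F s ≤ A * (T * s) ^ (-θ) := h1.trans h2
        _ = A * T ^ (-θ) * s ^ (-θ) := by rw [h3]; ring
    have hcalc : (∫ s in Set.Ioc (0:ℝ) δ, A * T ^ (-θ) * s ^ (-θ))
        = A * T ^ (-θ) * (δ ^ (1 - θ) / (1 - θ)) := by
      rw [integral_const_mul, ← intervalIntegral.integral_of_le hδpos.le,
        integral_rpow (Or.inl (by linarith)),
        Real.zero_rpow (by intro h; nlinarith : -θ + 1 ≠ 0),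
        show -θ + 1 = 1 - θ by ring, sub_zero]
    calc (∫ s in Set.Ioc (0:ℝ) δ, F s)
        ≤ A * T ^ (-θ) * (δ ^ (1 - θ) / (1 - θ)) := by rw [← hcalc]; exact hcomp
      _ = A * (δ ^ (1 - θ) / (1 - θ)) * T ^ (-θ) := by ring
      _ ≤ B / 4 * T ^ (-θ) := mul_le_mul_of_nonneg_right hpiece1 hTθ'.le
  -- bound piece 2
  have hfTδ : 0 < f (T * δ) := hfpos _ (mul_pos hT hδpos)
  have hb2 : (∫ s in Set.Ioc δ 1, F s) ≤ f (T * δ) := by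
    have hcomp : (∫ s in Set.Ioc δ 1, F s)
        ≤ ∫ _ in Set.Ioc δ 1, f (T * δ) := by
      refine setIntegral_mono_on hIntB (integrableOn_const ?_)
        measurableSet_Ioc ?_
      · rw [Real.volume_Ioc]; exact ENNReal.ofReal_ne_top
      · intro s hs
        have hs0 : 0 < s := lt_trans hδpos hs.1
        have h1 : f (T * s) ≤ f (T * δ) :=
          hmono (T * δ) (T * s) (mul_pos hT hδpos)
            (mul_le_mul_of_nonneg_left hs.1.le hT.le)
        have he : Real.exp (-s) ≤ 1 := Real.exp_le_one_iff.2 (by linarith)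
        simp only [hF]
        calc Real.exp (-s) * f (T * s) ≤ 1 * f (T * s) :=
              mul_le_mul_of_nonneg_right he (hfpos (T * s) (mul_pos hT hs0)).le
          _ = f (T * s) := one_mul _
          _ ≤ f (T * δ) := h1
    rw [setIntegral_const, Real.volume_real_Ioc_of_le (by linarith), smul_eq_mul] at hcomp
    have : (1 - δ) * f (T * δ) ≤ 1 * f (T * δ) :=
      mul_le_mul_of_nonneg_right (by linarith) hfTδ.le
    rw [one_mul] at this
    linarith
  -- bound piece 3
  have hfT : 0 < f T := hfpos T hT
  have hb3 : (∫ s in Set.Ioi (1:ℝ), F s) ≤ f T := by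
    have hIntG : IntegrableOn (fun s : ℝ => Real.exp (-s) * f T)
        (Set.Ioi (1:ℝ)) := by
      apply Integrable.mul_const
      have := exp_neg_integrableOn_Ioi (1:ℝ) one_pos
      exact (by simpa using this : IntegrableOn (fun x : ℝ => Real.exp (-x)) (Set.Ioi 1))
    have hcomp : (∫ s in Set.Ioi (1:ℝ), F s)
        ≤ ∫ s in Set.Ioi (1:ℝ), Real.exp (-s) * f T := by
      refine setIntegral_mono_on hIntC hIntG measurableSet_Ioi ?_
      intro s hs
      have hs1 : (1:ℝ) < s := hs
      have h1 : f (T * s) ≤ f T :=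
        hmono T (T * s) hT (le_mul_of_one_le_right hT.le hs1.le)
      simp only [hF]
      exact mul_le_mul_of_nonneg_left h1 (Real.exp_pos _).le
    rw [integral_mul_const, integral_exp_neg_Ioi] at hcomp
    calc (∫ s in Set.Ioi (1:ℝ), F s) ≤ Real.exp (-1) * f T := hcomp
      _ ≤ 1 * f T := mul_le_mul_of_nonneg_right
          (Real.exp_le_one_iff.2 (by norm_num)) hfT.le
      _ = f T := one_mul _
  -- combine
  have hmain : B * T ^ (-θ) ≤ B / 4 * T ^ (-θ) + f (T * δ) + f T := by
    rw [hsplit] at hG; linarith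
  -- log-convexity step
  have hδδ : 0 < T * (δ * δ) := by positivity
  have hconv : f (T * δ) ≤ (A * (T * (δ * δ)) ^ (-θ)) ^ l * f T ^ (1 - l) := by
    have h1δ : (1:ℝ) + δ ≠ 0 := by positivity
    have harg : l * (T * (δ * δ)) + (1 - l) * T = T * δ := by
      rw [hl]; field_simp; ring
    have h1 := hlog (T * (δ * δ)) T hδδ hT l hlpos.le hl1.le
    rw [harg] at h1
    have hδδ1 : δ * δ ≤ 1 := mul_le_one₀ hδ1 hδpos.le hδ1
    have h2 : f (T * (δ * δ)) ≤ A * (T * (δ * δ)) ^ (-θ) :=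
      hupper _ hδδ (mul_le_of_le_one_right hT.le hδδ1)
    calc f (T * δ) ≤ f (T * (δ * δ)) ^ l * f T ^ (1 - l) := h1
      _ ≤ (A * (T * (δ * δ)) ^ (-θ)) ^ l * f T ^ (1 - l) := by
          apply mul_le_mul_of_nonneg_right
          · exact Real.rpow_le_rpow (hfpos _ hδδ).le h2 hlpos.le
          · positivity
  -- rewrite in terms of u := f T * T^θ
  set u : ℝ := f T * T ^ θ with hu
  have hupos : 0 < u := by positivity
  have hKey : T ^ θ * f (T * δ) ≤ K * u ^ (1 - l) := by
    have e1 : A * (T * (δ * δ)) ^ (-θ) = A * (δ ^ (-θ) * δ ^ (-θ)) * T ^ (-θ) := by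
      rw [show T * (δ * δ) = T * δ * δ by ring, Real.mul_rpow (by positivity) hδpos.le,
        Real.mul_rpow hT.le hδpos.le]
      ring
    have e2 : (A * (T * (δ * δ)) ^ (-θ)) ^ l = K * (T ^ (-θ)) ^ l := by
      rw [e1, Real.mul_rpow (by positivity) (by positivity), hK]
    have e3 : T ^ θ * (T ^ (-θ)) ^ l = (T ^ θ) ^ (1 - l) := by
      rw [← Real.rpow_mul hT.le, ← Real.rpow_mul hT.le, ← Real.rpow_add hT]
      congr 1; ring
    calc T ^ θ * f (T * δ)
        ≤ T ^ θ * ((A * (T * (δ * δ)) ^ (-θ)) ^ l * f T ^ (1 - l)) :=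
          mul_le_mul_of_nonneg_left hconv hTθ.le
      _ = K * (T ^ θ * (T ^ (-θ)) ^ l) * f T ^ (1 - l) := by rw [e2]; ring
      _ = K * ((T ^ θ) ^ (1 - l) * f T ^ (1 - l)) := by rw [e3]; ring
      _ = K * u ^ (1 - l) := by
          rw [hu, Real.mul_rpow hfT.le hTθ.le]; ring
  -- main scalar inequality
  have h5 : B ≤ B / 4 + T ^ θ * f (T * δ) + u := by
    have h := mul_le_mul_of_nonneg_left hmain hTθ.le
    have eL : T ^ θ * (B * T ^ (-θ)) = B := by
      rw [show T ^ θ * (B * T ^ (-θ)) = B * (T ^ θ * T ^ (-θ)) by ring, hTT', mul_one]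
    have eR : T ^ θ * (B / 4 * T ^ (-θ) + f (T * δ) + f T)
        = B / 4 + T ^ θ * f (T * δ) + u := by
      rw [hu]
      have e0 : T ^ θ * (B / 4 * T ^ (-θ)) = B / 4 := by
        rw [show T ^ θ * (B / 4 * T ^ (-θ)) = B / 4 * (T ^ θ * T ^ (-θ)) by ring,
          hTT', mul_one]
      rw [mul_add, mul_add, e0]
      ring
    rw [eL, eR] at h
    exact h
  have h6 : 3 * B / 4 ≤ K * u ^ (1 - l) + u := by linarith
  -- conclude c ≤ u
  have hcu : c ≤ u := by
    rcases le_or_gt 1 u with h | h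
    · exact (min_le_left _ _).trans h
    · have hul : u ≤ u ^ (1 - l) := by
        have := Real.rpow_le_rpow_of_exponent_ge hupos h.le
          (by linarith : 1 - l ≤ 1)
        rwa [Real.rpow_one] at this
      have h7 : 3 * B / 4 ≤ (K + 1) * u ^ (1 - l) := by
        have : K * u ^ (1 - l) + u ≤ K * u ^ (1 - l) + u ^ (1 - l) := by linarith
        calc 3 * B / 4 ≤ K * u ^ (1 - l) + u := h6
          _ ≤ K * u ^ (1 - l) + u ^ (1 - l) := this
          _ = (K + 1) * u ^ (1 - l) := by ring
      have h8 : 3 * B / (4 * (K + 1)) ≤ u ^ (1 - l) := by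
        rw [div_le_iff₀ (by positivity)]
        linarith
      have h9 : (3 * B / (4 * (K + 1))) ^ ((1 - l)⁻¹) ≤ u := by
        calc (3 * B / (4 * (K + 1))) ^ ((1 - l)⁻¹)
            ≤ (u ^ (1 - l)) ^ ((1 - l)⁻¹) :=
              Real.rpow_le_rpow (by positivity) h8 (by positivity)
          _ = u := by
              rw [← Real.rpow_mul hupos.le, mul_inv_cancel₀ h1l.ne', Real.rpow_one]
      exact (min_le_right _ _).trans h9
  calc c * T ^ (-θ) ≤ u * T ^ (-θ) := mul_le_mul_of_nonneg_right hcu hTθ'.le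
    _ = f T := by
        rw [hu, show f T * T ^ θ * T ^ (-θ) = f T * (T ^ θ * T ^ (-θ)) by ring,
          hTT', mul_one]
end

section
/- For every A > 0, B > 0 and θ ∈ (0,1) there exist constants c > 0 and C > 0 with the following property: for every T > 0, every D with 0 < D ≤ T, and every nonincreasing, log-convex function f : (0,∞) → (0,∞) satisfying f(t) ≤ A t^{−θ} for all 0 < t ≤ T and ∫₀^∞ e^{−s} f(Ts) ds ≥ B D^{1−θ} T^{−1}, one has f(T) ≥ c T^{−θ} exp(−C T / D). -/
open MeasureTheory

section Helpers
open Set Real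

lemma exp_neg_mul_intervalIntegral {q : ℝ} (a b : ℝ) (hq : q ≠ 0) :
    ∫ s in a..b, Real.exp (-(q * s)) =
      (Real.exp (-(q * a)) - Real.exp (-(q * b))) / q := by
  have h : (fun s : ℝ => Real.exp (-(q * s))) = fun s => (fun x : ℝ => Real.exp (-x)) (q * s) := by
    funext s; rfl
  rw [h, intervalIntegral.integral_comp_mul_left (fun x : ℝ => Real.exp (-x)) hq]
  have h2 : ∫ x in q*a..q*b, Real.exp (-x) = Real.exp (-(q*a)) - Real.exp (-(q*b)) := by
    have h3 : (fun x : ℝ => Real.exp (-x)) = fun x => (fun y : ℝ => Real.exp y) (-x) := rfl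
    rw [h3, intervalIntegral.integral_comp_neg (fun y : ℝ => Real.exp y),
      integral_exp]
  rw [h2, smul_eq_mul]
  field_simp

lemma integral_split_bound {θ A' P q fT a : ℝ} (hθ0 : 0 < θ) (hθ1 : θ < 1)
    (ha : 0 < a) (ha1 : a ≤ 1) (hq : 0 < q)
    (hA' : 0 ≤ A') (hP : 0 ≤ P) (hfT : 0 ≤ fT)
    (g : ℝ → ℝ)
    (hg0 : ∀ s : ℝ, 0 < s → 0 ≤ g s)
    (h1 : ∀ s : ℝ, 0 < s → s ≤ a → g s ≤ A' * s ^ (-θ))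
    (h2 : ∀ s : ℝ, a < s → s ≤ 1 → g s ≤ P * Real.exp (-(q * s)))
    (h3 : ∀ s : ℝ, 1 < s → g s ≤ Real.exp (-s) * fT) :
    ∫ s in Set.Ioi (0:ℝ), g s ≤
      A' * a ^ (1 - θ) / (1 - θ) + P * Real.exp (-(q * a)) / q + fT := by
  set M₁ : ℝ → ℝ := fun s => A' * s ^ (-θ) with hM₁
  set M₂ : ℝ → ℝ := fun s => P * Real.exp (-(q * s)) with hM₂
  set M₃ : ℝ → ℝ := fun s => Real.exp (-s) * fT with hM₃
  set M : ℝ → ℝ := fun s =>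
    (Set.Ioc 0 a).indicator M₁ s + (Set.Ioc a 1).indicator M₂ s
      + (Set.Ioi 1).indicator M₃ s with hM
  -- integrabilities
  have i1 : IntegrableOn M₁ (Set.Ioc 0 a) := by
    have hr : IntervalIntegrable (fun x : ℝ => x ^ (-θ)) volume 0 a :=
      intervalIntegral.intervalIntegrable_rpow' (by linarith)
    have := (intervalIntegrable_iff_integrableOn_Ioc_of_le ha.le).mp hr
    exact this.const_mul A'
  have i2 : IntegrableOn M₂ (Set.Ioc a 1) := by
    apply Continuous.integrableOn_Ioc
    continuity
  have i3 : IntegrableOn M₃ (Set.Ioi 1) := by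
    have hfun : M₃ = fun x : ℝ => Real.exp (-1 * x) * fT := by
      funext x; rw [hM₃]; norm_num
    rw [hfun]
    exact (exp_neg_integrableOn_Ioi 1 zero_lt_one).mul_const fT
  have j1 : Integrable ((Set.Ioc 0 a).indicator M₁) := (integrable_indicator_iff measurableSet_Ioc).mpr i1
  have j2 : Integrable ((Set.Ioc a 1).indicator M₂) := (integrable_indicator_iff measurableSet_Ioc).mpr i2
  have j3 : Integrable ((Set.Ioi 1).indicator M₃) := (integrable_indicator_iff measurableSet_Ioi).mpr i3
  have jM : Integrable M := (j1.add j2).add j3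
  -- pointwise bound
  have hgM : ∀ s : ℝ, 0 < s → g s ≤ M s := by
    intro s hs
    have n1 : 0 ≤ (Set.Ioc 0 a).indicator M₁ s := by
      apply Set.indicator_nonneg; intro x hx
      exact mul_nonneg hA' (Real.rpow_nonneg (le_of_lt hx.1) _)
    have n2 : 0 ≤ (Set.Ioc a 1).indicator M₂ s := by
      apply Set.indicator_nonneg; intro x _
      exact mul_nonneg hP (Real.exp_pos _).le
    have n3 : 0 ≤ (Set.Ioi 1).indicator M₃ s := by
      apply Set.indicator_nonneg; intro x _
      exact mul_nonneg (Real.exp_pos _).le hfT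
    rcases le_or_gt s a with hsa | hsa
    · have hmem : s ∈ Set.Ioc 0 a := ⟨hs, hsa⟩
      have : (Set.Ioc 0 a).indicator M₁ s = M₁ s := Set.indicator_of_mem hmem _
      calc g s ≤ M₁ s := h1 s hs hsa
        _ ≤ M s := by rw [hM]; simp only []; rw [this]; linarith
    · rcases le_or_gt s 1 with hs1 | hs1
      · have hmem : s ∈ Set.Ioc a 1 := ⟨hsa, hs1⟩
        have : (Set.Ioc a 1).indicator M₂ s = M₂ s := Set.indicator_of_mem hmem _
        calc g s ≤ M₂ s := h2 s hsa hs1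
          _ ≤ M s := by rw [hM]; simp only []; rw [this]; linarith
      · have hmem : s ∈ Set.Ioi 1 := hs1
        have : (Set.Ioi 1).indicator M₃ s = M₃ s := Set.indicator_of_mem hmem _
        calc g s ≤ M₃ s := h3 s hs1
          _ ≤ M s := by rw [hM]; simp only []; rw [this]; linarith
  -- integral comparison
  have key : ∫ s in Set.Ioi (0:ℝ), g s ≤ ∫ s in Set.Ioi (0:ℝ), M s := by
    apply integral_mono_of_nonneg
    · exact (ae_restrict_iff' measurableSet_Ioi).mpr
        (Filter.Eventually.of_forall fun s hs => hg0 s hs)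
    · exact jM.restrict
    · exact (ae_restrict_iff' measurableSet_Ioi).mpr
        (Filter.Eventually.of_forall fun s hs => hgM s hs)
  -- compute the majorant integral
  have split : ∫ s in Set.Ioi (0:ℝ), M s =
      (∫ s in Set.Ioc 0 a, M₁ s) + (∫ s in Set.Ioc a 1, M₂ s) + (∫ s in Set.Ioi 1, M₃ s) := by
    have k12 : Integrable (fun s => (Set.Ioc 0 a).indicator M₁ s
        + (Set.Ioc a 1).indicator M₂ s) (volume.restrict (Set.Ioi 0)) :=
      (j1.restrict).add (j2.restrict)
    rw [hM]
    rw [integral_add k12 (j3.restrict), integral_add (j1.restrict) (j2.restrict)]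
    rw [setIntegral_indicator measurableSet_Ioc, setIntegral_indicator measurableSet_Ioc,
        setIntegral_indicator measurableSet_Ioi]
    congr 2
    · congr 1
      rw [Set.inter_eq_self_of_subset_right Set.Ioc_subset_Ioi_self]
    · congr 1
      rw [Set.inter_eq_self_of_subset_right]
      intro x hx; exact lt_trans ha hx.1
    · congr 1
      rw [Set.inter_eq_self_of_subset_right]
      intro x hx; exact lt_trans (lt_of_lt_of_le ha ha1) hx
  have E1 : ∫ s in Set.Ioc 0 a, M₁ s = A' * (a ^ (1 - θ) / (1 - θ)) := by
    rw [← intervalIntegral.integral_of_le ha.le, intervalIntegral.integral_const_mul,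
      integral_rpow (Or.inl (by linarith))]
    rw [Real.zero_rpow (by linarith : -θ + 1 ≠ 0)]
    rw [show -θ + 1 = 1 - θ by ring]
    ring
  have E2 : ∫ s in Set.Ioc a 1, M₂ s = P * ((Real.exp (-(q*a)) - Real.exp (-(q*1)))/q) := by
    rw [← intervalIntegral.integral_of_le ha1, intervalIntegral.integral_const_mul,
      exp_neg_mul_intervalIntegral a 1 hq.ne']
  have E3 : ∫ s in Set.Ioi 1, M₃ s = Real.exp (-1) * fT := by
    rw [hM₃]
    rw [integral_mul_const, integral_exp_neg_Ioi]
  rw [split, E1, E2, E3] at key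
  have b2 : P * ((Real.exp (-(q*a)) - Real.exp (-(q*1)))/q) ≤ P * Real.exp (-(q*a)) / q := by
    rw [mul_div_assoc]
    gcongr
    have : 0 < Real.exp (-(q*1)) := Real.exp_pos _
    linarith
  have b3 : Real.exp (-1) * fT ≤ fT := by
    nlinarith [Real.exp_pos (-1:ℝ), Real.exp_le_one_iff.mpr (by norm_num : (-1:ℝ) ≤ 0), hfT]
  calc ∫ s in Set.Ioi (0:ℝ), g s ≤ _ := key
    _ ≤ A' * a ^ (1 - θ) / (1 - θ) + P * Real.exp (-(q * a)) / q + fT := by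
        rw [mul_div_assoc]
        gcongr <;> linarith

lemma rpow_T_identity {θ x T : ℝ} (hx : 0 < x) (hT : 0 < T) :
    T ^ (-θ) * (x / T) ^ (1 - θ) = x ^ (1 - θ) * T⁻¹ := by
  rw [Real.div_rpow hx.le hT.le]
  rw [show T ^ (-θ) * (x ^ (1-θ) / T ^ (1-θ)) = x ^ (1-θ) * (T ^ (-θ) / T ^ (1-θ)) by ring]
  rw [← Real.rpow_sub hT]
  rw [show -θ - (1 - θ) = (-1 : ℝ) by ring, Real.rpow_neg_one]

lemma rpow_ratio_lower {θ D T : ℝ} (hθ0 : 0 ≤ θ) (hθ1 : θ ≤ 1) (hD : 0 < D) (hDT : D ≤ T) :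
    Real.exp (-(T / D)) ≤ (D / T) ^ (1 - θ) := by
  have hT : 0 < T := lt_of_lt_of_le hD hDT
  have hpos : 0 < D / T := div_pos hD hT
  rw [Real.rpow_def_of_pos hpos]
  apply Real.exp_le_exp.mpr
  have hlog1 : Real.log (T / D) ≤ T / D := by
    have := Real.log_le_sub_one_of_pos (div_pos hT hD)
    linarith
  have hlogneg : Real.log (D / T) ≤ 0 :=
    Real.log_nonpos (le_of_lt hpos) ((div_le_one hT).mpr hDT)
  have hinv : Real.log (D / T) = -Real.log (T / D) := by
    rw [show D / T = (T / D)⁻¹ by rw [inv_div], Real.log_inv]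
  have h1 : -(T / D) ≤ Real.log (D / T) := by rw [hinv]; linarith
  nlinarith


end Helpers

set_option maxHeartbeats 2000000

/-- **Intermediate-time heat kernel lower bound** (abstract form).
For every `A, B > 0` and `θ ∈ (0,1)` there are `c, C > 0` such that for every `T > 0`,
every `0 < D ≤ T`, and every nonincreasing log-convex `f : (0,∞) → (0,∞)` with
`f(t) ≤ A t^{−θ}` for `0 < t ≤ T` and `∫₀^∞ e^{−s} f(Ts) ds ≥ B D^{1−θ} T^{−1}`,
one has `f(T) ≥ c T^{−θ} exp(−C T/D)`. -/
theorem intermediate_time_lower_bound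
    (A B θ : ℝ) (hA : 0 < A) (hB : 0 < B) (hθ0 : 0 < θ) (hθ1 : θ < 1) :
    ∃ c C : ℝ, 0 < c ∧ 0 < C ∧
      ∀ (T D : ℝ) (f : ℝ → ℝ), 0 < T → 0 < D → D ≤ T →
        (∀ t : ℝ, 0 < t → 0 < f t) →
        (∀ a b : ℝ, 0 < a → a ≤ b → f b ≤ f a) →
        (∀ a b : ℝ, 0 < a → 0 < b → ∀ l : ℝ, 0 ≤ l → l ≤ 1 →
          f (l * a + (1 - l) * b) ≤ f a ^ l * f b ^ (1 - l)) →
        (∀ t : ℝ, 0 < t → t ≤ T → f t ≤ A * t ^ (-θ)) →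
        (B * D ^ (1 - θ) * T⁻¹ ≤ ∫ s in Set.Ioi (0 : ℝ), Real.exp (-s) * f (T * s)) →
        c * T ^ (-θ) * Real.exp (-C * T / D) ≤ f T := by
  have h1θ : (0:ℝ) < 1 - θ := by linarith
  set δ : ℝ := min (1/2) ((B * (1 - θ) / (3 * A)) ^ ((1:ℝ) / (1 - θ))) with hδdef
  have hδ0 : 0 < δ := by
    apply lt_min (by norm_num)
    exact Real.rpow_pos_of_pos (by positivity) _
  have hδhalf : δ ≤ 1/2 := min_le_left _ _
  have hδkey : A * δ ^ (1 - θ) / (1 - θ) ≤ B / 3 := by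
    have h1 : δ ^ (1 - θ) ≤ ((B * (1 - θ) / (3 * A)) ^ ((1:ℝ) / (1 - θ))) ^ (1 - θ) :=
      Real.rpow_le_rpow hδ0.le (min_le_right _ _) h1θ.le
    have h2 : ((B * (1 - θ) / (3 * A)) ^ ((1:ℝ) / (1 - θ))) ^ (1 - θ)
        = B * (1 - θ) / (3 * A) := by
      rw [← Real.rpow_mul (by positivity), one_div_mul_cancel h1θ.ne', Real.rpow_one]
    have h3 : δ ^ (1 - θ) ≤ B * (1 - θ) / (3 * A) := h2 ▸ h1
    rw [div_le_div_iff₀ h1θ (by norm_num)]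
    calc A * δ ^ (1 - θ) * 3 ≤ A * (B * (1 - θ) / (3 * A)) * 3 := by
          have := Real.rpow_nonneg hδ0.le (1 - θ); nlinarith
      _ = B * (1 - θ) := by field_simp

  have hδθpos : (0:ℝ) < δ ^ θ := Real.rpow_pos_of_pos hδ0 θ
  refine ⟨B/6, 3*A/(B * δ ^ θ) + 1, by positivity, by positivity, ?_⟩
  intro T D f hT hD hDT hfpos hmono hlc hup hint
  set C₁ : ℝ := 3*A/(B * δ ^ θ) with hC₁def
  have hC₁pos : 0 < C₁ := by positivity
  set t₀ : ℝ := δ * D with ht₀def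
  have ht₀pos : 0 < t₀ := by positivity
  have ht₀T : t₀ < T := by
    have h5 : δ * D ≤ (1/2) * D := by nlinarith only [hδhalf, hD]
    linarith only [h5, hDT, hD, ht₀def]
  set a : ℝ := t₀ / T with hadef
  have hapos : 0 < a := div_pos ht₀pos hT
  have ha1 : a ≤ 1 := by rw [hadef, div_le_one hT]; exact ht₀T.le
  have hTa : T * a = t₀ := by rw [hadef]; field_simp
  set m : ℝ := B/3 * (D ^ (1-θ) * T⁻¹) with hmdef
  have hDrp : (0:ℝ) < D ^ (1-θ) := Real.rpow_pos_of_pos hD _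
  have hm : 0 < m := by positivity
  have hTθ : (0:ℝ) < T ^ (-θ) := Real.rpow_pos_of_pos hT _
  have hfTpos : 0 < f T := hfpos T hT
  have hft₀pos : 0 < f t₀ := hfpos t₀ ht₀pos
  have hint3 : 3 * m ≤ ∫ s in Set.Ioi (0:ℝ), Real.exp (-s) * f (T*s) := by
    calc 3*m = B * D^(1-θ) * T⁻¹ := by rw [hmdef]; ring
      _ ≤ _ := hint
  set A' : ℝ := A * T ^ (-θ) with hA'def
  have hA'pos : 0 < A' := by positivity
  have hI1 : A' * a ^ (1-θ) / (1-θ) ≤ m := by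
    have hid : T ^ (-θ) * a ^ (1-θ) = δ^(1-θ) * (D ^ (1-θ) * T⁻¹) := by
      have ha2 : a = (δ*D)/T := by rw [hadef, ht₀def]
      rw [ha2, rpow_T_identity (by positivity) hT, Real.mul_rpow hδ0.le hD.le]
      ring
    calc A' * a^(1-θ)/(1-θ) = (A * δ^(1-θ)/(1-θ)) * (D^(1-θ) * T⁻¹) := by
          rw [hA'def, mul_assoc, hid]; ring
      _ ≤ (B/3) * (D^(1-θ)*T⁻¹) :=
          mul_le_mul_of_nonneg_right hδkey (by positivity)
      _ = m := by rw [hmdef]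
  have hg0 : ∀ s : ℝ, 0 < s → 0 ≤ Real.exp (-s) * f (T*s) := fun s hs =>
    mul_nonneg (Real.exp_pos _).le (hfpos _ (by positivity)).le
  have hb1 : ∀ s : ℝ, 0 < s → s ≤ a → Real.exp (-s) * f (T*s) ≤ A' * s ^ (-θ) := by
    intro s hs hsa
    have hTs : 0 < T*s := by positivity
    have hTsT : T*s ≤ T := by
      have h6' : s ≤ 1 := le_trans hsa ha1
      nlinarith only [h6', hT, hs]
    have h2 := hup (T*s) hTs hTsT
    have h3 : (T*s) ^ (-θ) = T^(-θ) * s^(-θ) := Real.mul_rpow hT.le hs.le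
    have hexp : Real.exp (-s) ≤ 1 := Real.exp_le_one_iff.mpr (by linarith only [hs])
    calc Real.exp (-s) * f (T*s) ≤ 1 * f (T*s) :=
          mul_le_mul_of_nonneg_right hexp (hfpos (T*s) hTs).le
      _ = f (T*s) := one_mul _
      _ ≤ A * (T*s)^(-θ) := h2
      _ = A' * s^(-θ) := by rw [h3, hA'def]; ring
  have hmono' : ∀ s : ℝ, a ≤ s → f (T*s) ≤ f t₀ := by
    intro s hsa
    have h6 : t₀ ≤ T*s := by
      rw [← hTa]; exact mul_le_mul_of_nonneg_left hsa hT.le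
    exact hmono t₀ (T*s) ht₀pos h6
  -- Step: f t₀ ≥ m
  have hft₀m : m ≤ f t₀ := by
    have hb2' : ∀ s : ℝ, a < s → s ≤ 1 →
        Real.exp (-s) * f (T*s) ≤ f t₀ * Real.exp (-(1 * s)) := by
      intro s hsa _
      calc Real.exp (-s) * f (T*s) ≤ Real.exp (-s) * f t₀ :=
            mul_le_mul_of_nonneg_left (hmono' s hsa.le) (Real.exp_pos _).le
        _ = f t₀ * Real.exp (-(1*s)) := by rw [one_mul]; ring
    have hb3' : ∀ s : ℝ, 1 < s → Real.exp (-s) * f (T*s) ≤ Real.exp (-s) * f t₀ := by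
      intro s hs1
      exact mul_le_mul_of_nonneg_left (hmono' s (le_trans ha1 hs1.le)) (Real.exp_pos _).le
    have happ := integral_split_bound hθ0 hθ1 hapos ha1 one_pos hA'pos.le
      hft₀pos.le hft₀pos.le (fun s => Real.exp (-s) * f (T*s)) hg0 hb1 hb2' hb3'
    have hcomb := le_trans hint3 happ
    have hexpa : f t₀ * Real.exp (-(1*a)) / 1 ≤ f t₀ := by
      rw [div_one]
      calc f t₀ * Real.exp (-(1*a)) ≤ f t₀ * 1 :=
            mul_le_mul_of_nonneg_left (Real.exp_le_one_iff.mpr (by linarith only [hapos])) hft₀pos.le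
        _ = f t₀ := mul_one _
    linarith only [hcomb, hexpa, hI1, hm]
  -- lower bound for m
  have hmge : B/3 * (T^(-θ) * Real.exp (-(T/D))) ≤ m := by
    rw [hmdef]
    apply mul_le_mul_of_nonneg_left ?_ (by positivity)
    rw [← rpow_T_identity hD hT]
    exact mul_le_mul_of_nonneg_left (rpow_ratio_lower hθ0.le hθ1.le hD hDT) hTθ.le
  rcases le_or_gt (m/2) (f T) with hcase | hcase
  · -- easy case
    calc B/6 * T^(-θ) * Real.exp (-(C₁+1) * T / D)
        ≤ B/6 * T^(-θ) * Real.exp (-(T/D)) := by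
          apply mul_le_mul_of_nonneg_left ?_ (by positivity)
          apply Real.exp_le_exp.mpr
          rw [mul_div_assoc]
          have hTD : 0 < T/D := by positivity
          nlinarith only [hTD, hC₁pos]
      _ = (1/2) * (B/3 * (T^(-θ) * Real.exp (-(T/D)))) := by ring
      _ ≤ (1/2) * m := by
          apply mul_le_mul_of_nonneg_left hmge (by norm_num)
      _ = m/2 := by ring
      _ ≤ f T := hcase
  · -- main case
    have hfT2 : 2 * f T < f t₀ := by linarith only [hcase, hft₀m]
    set L : ℝ := Real.log (f t₀) - Real.log (f T) with hLdef
    have hLlog2 : Real.log 2 ≤ L := by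
      have h7 : Real.log (2 * f T) ≤ Real.log (f t₀) :=
        Real.log_le_log (by positivity) hfT2.le
      rw [Real.log_mul two_ne_zero hfTpos.ne'] at h7
      rw [hLdef]; linarith only [h7]
    have hL0 : 0 < L := lt_of_lt_of_le (Real.log_pos one_lt_two) hLlog2
    have hTt₀ : 0 < T - t₀ := by linarith only [ht₀T]
    set k : ℝ := L / (T - t₀) with hkdef
    have hkpos : 0 < k := div_pos hL0 hTt₀
    set P : ℝ := f t₀ * Real.exp (k * t₀) with hPdef
    have hPpos : 0 < P := by positivity
    have hq : 0 < k * T := by positivity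
    have hb2 : ∀ s : ℝ, a < s → s ≤ 1 →
        Real.exp (-s) * f (T*s) ≤ P * Real.exp (-(k * T * s)) := by
      intro s hsa hs1
      have hts : t₀ < T * s := by
        rw [← hTa]; exact mul_lt_mul_of_pos_left hsa hT
      have htsT : T * s ≤ T := by nlinarith only [hs1, hT]
      set l : ℝ := (T - T*s)/(T - t₀) with hldef
      have hl0 : 0 ≤ l := div_nonneg (by linarith only [htsT]) hTt₀.le
      have hl1 : l ≤ 1 := by
        rw [hldef, div_le_one hTt₀]; linarith only [hts]
      have hcomb : l * t₀ + (1 - l) * T = T * s := by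
        rw [hldef]; field_simp; ring
      have hlc' := hlc t₀ T ht₀pos hT l hl0 hl1
      rw [hcomb] at hlc'
      have hexpand : f t₀ ^ l * f T ^ (1-l) = f t₀ * Real.exp (-((1-l) * L)) := by
        rw [Real.rpow_def_of_pos hft₀pos, Real.rpow_def_of_pos hfTpos, ← Real.exp_add]
        rw [show Real.log (f t₀) * l + Real.log (f T) * (1-l)
            = Real.log (f t₀) + -((1-l) * L) by rw [hLdef]; ring]
        rw [Real.exp_add, Real.exp_log hft₀pos]
      have hLeq : (1-l) * L = k * T * s - k * t₀ := by
        have he3 : (1 - l) = (T*s - t₀)/(T - t₀) := by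
          rw [hldef]; field_simp; ring
        rw [he3, hkdef]; field_simp
      calc Real.exp (-s) * f (T*s) ≤ 1 * f (T*s) :=
            mul_le_mul_of_nonneg_right (Real.exp_le_one_iff.mpr (by linarith only [hapos, hsa]))
              (hfpos (T*s) (lt_trans ht₀pos hts)).le
        _ = f (T*s) := one_mul _
        _ ≤ f t₀ ^ l * f T ^ (1-l) := hlc'
        _ = f t₀ * Real.exp (-((1-l)*L)) := hexpand
        _ = P * Real.exp (-(k*T*s)) := by
            rw [hPdef, hLeq,
              show f t₀ * Real.exp (k*t₀) * Real.exp (-(k * T * s))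
                = f t₀ * (Real.exp (k*t₀) * Real.exp (-(k * T * s))) from mul_assoc _ _ _,
              ← Real.exp_add]
            congr 1
            ring
    have hb3 : ∀ s : ℝ, 1 < s → Real.exp (-s) * f (T*s) ≤ Real.exp (-s) * f T := by
      intro s hs1
      have h8 : f (T*s) ≤ f T := hmono T (T*s) hT (by nlinarith only [hs1, hT])
      exact mul_le_mul_of_nonneg_left h8 (Real.exp_pos _).le
    have happ := integral_split_bound hθ0 hθ1 hapos ha1 hq hA'pos.le hPpos.le hfTpos.le
      (fun s => Real.exp (-s) * f (T*s)) hg0 hb1 hb2 hb3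
    have hmid : P * Real.exp (-(k*T*a))/(k*T) = f t₀ / (k*T) := by
      rw [hPdef, show k*T*a = k*t₀ by rw [mul_assoc, hTa], mul_assoc, ← Real.exp_add]
      simp
    have hchain : 3*m ≤ m + f t₀/(k*T) + f T := by
      have h9 := le_trans hint3 happ
      rw [hmid] at h9
      linarith only [h9, hI1]
    have h32 : (3/2)*m ≤ f t₀/(k*T) := by linarith only [hchain, hcase]
    have h4 : (3/2)*m*(k*T) ≤ f t₀ := (le_div_iff₀ hq).mp h32
    -- identity : A * t₀^(-θ) = C₁ * (T/D) * m
    have hident : A * t₀ ^ (-θ) = C₁ * (T/D) * m := by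
      have h1' : t₀ ^ (-θ) = δ^(-θ) * D^(-θ) := by
        rw [ht₀def]; exact Real.mul_rpow hδ0.le hD.le
      have h2' : δ^(-θ) = (δ^θ)⁻¹ := Real.rpow_neg hδ0.le θ
      have h3' : D^(-θ) = D^(1-θ) * D⁻¹ := by
        rw [← Real.rpow_neg_one D, ← Real.rpow_add hD]
        congr 1; ring
      rw [h1', h2', h3', hC₁def, hmdef]
      field_simp
    have hLbound : L ≤ C₁ * (T/D) := by
      have hL_le : L ≤ k * T := by
        have hL_eq : L = k * (T - t₀) := by
          rw [hkdef, div_mul_cancel₀ _ hTt₀.ne']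
        have hkt₀ : 0 ≤ k * t₀ := mul_nonneg hkpos.le ht₀pos.le
        have hexp2 : k * (T - t₀) = k*T - k*t₀ := by ring
        linarith only [hL_eq, hkt₀, hexp2]
      have hft₀up : f t₀ ≤ C₁ * (T/D) * m := by
        calc f t₀ ≤ A * t₀^(-θ) := hup t₀ ht₀pos ht₀T.le
          _ = C₁ * (T/D) * m := hident
      have hkT : k*T ≤ C₁ * (T/D) := by
        have h10 : (3/2)*m*(k*T) ≤ (3/2)*m*(C₁*(T/D)) := by
          have hx : 0 ≤ C₁ * (T/D) * m := by positivity
          calc (3/2)*m*(k*T) ≤ f t₀ := h4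
            _ ≤ C₁ * (T/D) * m := hft₀up
            _ ≤ (3/2)*m*(C₁*(T/D)) := by nlinarith only [hx]
        have h11 : 0 < (3/2)*m := by positivity
        exact le_of_mul_le_mul_left h10 h11
      exact le_trans hL_le hkT
    have hexpL : f T = f t₀ * Real.exp (-L) := by
      rw [hLdef, neg_sub, Real.exp_sub, Real.exp_log hfTpos, Real.exp_log hft₀pos]
      field_simp
    calc B/6 * T^(-θ) * Real.exp (-(C₁+1) * T / D)
        ≤ B/3 * T^(-θ) * Real.exp (-(C₁+1) * T / D) := by
          apply mul_le_mul_of_nonneg_right ?_ (Real.exp_pos _).le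
          exact mul_le_mul_of_nonneg_right (by linarith only [hB] : B/6 ≤ B/3) hTθ.le
      _ = (B/3 * (T^(-θ) * Real.exp (-(T/D)))) * Real.exp (-(C₁*(T/D))) := by
          have hsplit : Real.exp (-(C₁+1) * T / D)
              = Real.exp (-(T/D)) * Real.exp (-(C₁*(T/D))) := by
            rw [← Real.exp_add]
            congr 1
            field_simp
            ring
          rw [hsplit]
          ring
      _ ≤ m * Real.exp (-(C₁*(T/D))) :=
          mul_le_mul_of_nonneg_right hmge (Real.exp_pos _).le
      _ ≤ f t₀ * Real.exp (-(C₁*(T/D))) :=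
          mul_le_mul_of_nonneg_right hft₀m (Real.exp_pos _).le
      _ ≤ f t₀ * Real.exp (-L) := by
          apply mul_le_mul_of_nonneg_left ?_ hft₀pos.le
          exact Real.exp_le_exp.mpr (by linarith only [hLbound])
      _ = f T := hexpL.symm
end

section
/- For every A₁ > 0, A₂ > 0, B > 0, θ ∈ (0,1) and μ > 0 there exist constants c > 0 and C > 0 with the following property: for every T ≥ 2/μ, every λ with 0 < λ ≤ min(1, T), and every nonincreasing, log-convex function f : (0,∞) → (0,∞) satisfying f(t) ≤ A₁ t^{−θ} for all 0 < t ≤ 1/μ, f(t) ≤ A₂ e^{−μt} for all t ≥ 1/μ, and ∫₀^∞ e^{−s} f(Ts) ds ≥ B λ^{1−θ} T^{−1}, one has f(T) ≥ c λ^{1−θ} e^{−μT} exp(−C (T/λ)^{1/(1−θ)}). -/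
open MeasureTheory

set_option maxHeartbeats 1000000 in
/-- **Long-time heat kernel lower bound** (abstract form).
For every `A₁, A₂, B > 0`, `θ ∈ (0,1)` and `μ > 0` there are `c, C > 0` such that for
every `T ≥ 2/μ`, every `0 < λ ≤ min(1, T)`, and every nonincreasing log-convex
`f : (0,∞) → (0,∞)` with `f(t) ≤ A₁ t^{−θ}` for `0 < t ≤ 1/μ`, `f(t) ≤ A₂ e^{−μt}` for
`t ≥ 1/μ`, and `∫₀^∞ e^{−s} f(Ts) ds ≥ B λ^{1−θ} T^{−1}`, one has
`f(T) ≥ c λ^{1−θ} e^{−μT} exp(−C (T/λ)^{1/(1−θ)})`. -/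
theorem long_time_lower_bound
    (A₁ A₂ B θ μ : ℝ) (hA₁ : 0 < A₁) (hA₂ : 0 < A₂) (hB : 0 < B)
    (hθ0 : 0 < θ) (hθ1 : θ < 1) (hμ : 0 < μ) :
    ∃ c C : ℝ, 0 < c ∧ 0 < C ∧
      ∀ (T l : ℝ) (f : ℝ → ℝ), 2 / μ ≤ T → 0 < l → l ≤ min 1 T →
        (∀ t : ℝ, 0 < t → 0 < f t) →
        (∀ a b : ℝ, 0 < a → a ≤ b → f b ≤ f a) →
        (∀ a b : ℝ, 0 < a → 0 < b → ∀ lam : ℝ, 0 ≤ lam → lam ≤ 1 →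
          f (lam * a + (1 - lam) * b) ≤ f a ^ lam * f b ^ (1 - lam)) →
        (∀ t : ℝ, 0 < t → t ≤ 1 / μ → f t ≤ A₁ * t ^ (-θ)) →
        (∀ t : ℝ, 1 / μ ≤ t → f t ≤ A₂ * Real.exp (-μ * t)) →
        (B * l ^ (1 - θ) * T⁻¹ ≤ ∫ s in Set.Ioi (0 : ℝ), Real.exp (-s) * f (T * s)) →
        c * l ^ (1 - θ) * Real.exp (-μ * T) *
            Real.exp (-C * (T / l) ^ (1 / (1 - θ))) ≤ f T := by
  have hθ1' : (0:ℝ) < 1 - θ := by linarith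
  -- the split parameter δ
  set ξ : ℝ := ((1 - θ) * B / (2 * A₁)) ^ (1 / (1 - θ)) with hξ_def
  have hξ0 : 0 < ξ := Real.rpow_pos_of_pos (by positivity) _
  set δ : ℝ := min (1 / μ) (min (1 / 2) ξ) with hδ_def
  have hδ0 : 0 < δ := lt_min (by positivity) (lt_min (by norm_num) hξ0)
  have hδμ : δ ≤ 1 / μ := min_le_left _ _
  have hδhalf : δ ≤ 1 / 2 := le_trans (min_le_right _ _) (min_le_left _ _)
  have hδξ : δ ≤ ξ := le_trans (min_le_right _ _) (min_le_right _ _)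
  have hkey : A₁ * δ ^ (1 - θ) ≤ (1 - θ) * B / 2 := by
    have h1 : δ ^ (1 - θ) ≤ ξ ^ (1 - θ) :=
      Real.rpow_le_rpow hδ0.le hδξ hθ1'.le
    have h2 : ξ ^ (1 - θ) = (1 - θ) * B / (2 * A₁) := by
      rw [hξ_def, ← Real.rpow_mul (by positivity), one_div_mul_cancel hθ1'.ne',
        Real.rpow_one]
    have h3 : δ ^ (1 - θ) ≤ (1 - θ) * B / (2 * A₁) := h2 ▸ h1
    have h4 : A₁ * δ ^ (1 - θ) ≤ A₁ * ((1 - θ) * B / (2 * A₁)) :=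
      mul_le_mul_of_nonneg_left h3 hA₁.le
    have h5 : A₁ * ((1 - θ) * B / (2 * A₁)) = (1 - θ) * B / 2 := by
      field_simp
    linarith
  -- constants for the final estimate
  set q : ℝ := θ / (1 - θ) with hq_def
  have hq0 : 0 < q := by rw [hq_def]; positivity
  have hδ2 : (0:ℝ) < δ / 2 := by linarith
  have hδ2pow : 0 < (δ / 2) ^ (-θ) := Real.rpow_pos_of_pos hδ2 _
  set K₁ : ℝ := A₁ * (δ / 2) ^ (-θ) + 1 + B * μ with hK₁_def
  have hK₁0 : 0 < K₁ := by
    rw [hK₁_def]; nlinarith [mul_pos hA₁ hδ2pow, mul_pos hB hμ]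
  set K₂ : ℝ := max 1 ((μ / 2) ^ θ) with hK₂_def
  have hK₂0 : 0 < K₂ := lt_of_lt_of_le one_pos (le_max_left _ _)
  set K : ℝ := K₁ * K₂ * (2 / B) with hK_def
  have hK0 : 0 < K := by
    rw [hK_def]; exact mul_pos (mul_pos hK₁0 hK₂0) (by positivity)
  set C : ℝ := (2 / δ) * (|Real.log K| + 2 / q + 1) with hC_def
  have hC0 : 0 < C := by
    rw [hC_def]
    have h1 : 0 < 2 / δ := by positivity
    have h2 : 0 ≤ |Real.log K| := abs_nonneg _
    have h3 : 0 < 2 / q := by positivity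
    nlinarith
  refine ⟨1, C, one_pos, hC0, ?_⟩
  intro T l f hT hl0 hlmin hfpos hfmono hfconv hshort _hlong hint
  have hT0 : 0 < T := lt_of_lt_of_le (by positivity) hT
  have hl1 : l ≤ 1 := le_trans hlmin (min_le_left _ _)
  have hlT : l ≤ T := le_trans hlmin (min_le_right _ _)
  set x : ℝ := T / l with hx_def
  have hx1 : 1 ≤ x := (one_le_div hl0).mpr hlT
  have hx0 : 0 < x := lt_of_lt_of_le one_pos hx1
  have hTμ : T⁻¹ ≤ μ / 2 := by
    rw [div_le_iff₀ hμ] at hT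
    rw [inv_le_comm₀ hT0 (by positivity), inv_div]
    rw [div_le_iff₀ hμ]
    linarith
  -- the auxiliary points
  set a : ℝ := δ * l / 2 with ha_def
  have ha0 : 0 < a := by
    rw [ha_def]; exact div_pos (mul_pos hδ0 hl0) two_pos
  have h2a : δ * l ≤ δ := by nlinarith
  have h2aμ : δ * l ≤ 1 / μ := le_trans h2a hδμ
  have ha2a : a ≤ δ * l := by
    rw [ha_def]; nlinarith [mul_pos hδ0 hl0]
  have haμ : a ≤ 1 / μ := le_trans ha2a h2aμ
  have h2aT : δ * l ≤ T / 2 := by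
    nlinarith [mul_le_mul_of_nonneg_left hlT hδ0.le,
      mul_le_mul_of_nonneg_right hδhalf hT0.le]
  have haT : a < T := by
    rw [ha_def]; nlinarith [mul_pos hδ0 hl0]
  set ε : ℝ := δ * l / T with hε_def
  have hε0 : 0 < ε := by
    rw [hε_def]; exact div_pos (mul_pos hδ0 hl0) hT0
  have hTε : T * ε = δ * l := by
    rw [hε_def]; field_simp
  -- the intermediate lower bound m
  have hlpow : 0 < l ^ (1 - θ) := Real.rpow_pos_of_pos hl0 _
  have hlpow1 : l ^ (1 - θ) ≤ 1 := Real.rpow_le_one hl0.le hl1 hθ1'.le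
  set m : ℝ := B / 2 * l ^ (1 - θ) * T⁻¹ with hm_def
  have hm0 : 0 < m := by
    rw [hm_def]
    exact mul_pos (mul_pos (by linarith) hlpow) (inv_pos.mpr hT0)
  -- Step 0: integrability
  by_cases hInt : IntegrableOn (fun s => Real.exp (-s) * f (T * s)) (Set.Ioi (0:ℝ)) volume
  swap
  · exfalso
    rw [MeasureTheory.integral_undef hInt] at hint
    have : (0:ℝ) < B * l ^ (1 - θ) * T⁻¹ :=
      mul_pos (mul_pos hB hlpow) (inv_pos.mpr hT0)
    linarith
  -- Step 1: lower bound for f (δ l)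
  have hstep1 : m ≤ f (δ * l) := by
    have hsub1 : Set.Ioc (0:ℝ) ε ⊆ Set.Ioi 0 := Set.Ioc_subset_Ioi_self
    have hsub2 : Set.Ioi ε ⊆ Set.Ioi (0:ℝ) := Set.Ioi_subset_Ioi hε0.le
    have hInt1 := hInt.mono_set hsub1
    have hInt2 := hInt.mono_set hsub2
    have hsplit : (∫ s in Set.Ioi (0:ℝ), Real.exp (-s) * f (T * s)) =
        (∫ s in Set.Ioc (0:ℝ) ε, Real.exp (-s) * f (T * s)) +
        (∫ s in Set.Ioi ε, Real.exp (-s) * f (T * s)) := by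
      rw [← MeasureTheory.setIntegral_union (Set.Ioc_disjoint_Ioi le_rfl)
        measurableSet_Ioi hInt1 hInt2, Set.Ioc_union_Ioi_eq_Ioi hε0.le]
    -- bound on (0, ε]
    have hIrpow : IntegrableOn (fun s : ℝ => A₁ * T ^ (-θ) * s ^ (-θ))
        (Set.Ioc (0:ℝ) ε) volume :=
      ((intervalIntegral.intervalIntegrable_rpow' (a := 0) (b := ε) (r := -θ)
        (by linarith)).1.const_mul (A₁ * T ^ (-θ)))
    have hb1 : (∫ s in Set.Ioc (0:ℝ) ε, Real.exp (-s) * f (T * s)) ≤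
        ∫ s in Set.Ioc (0:ℝ) ε, A₁ * T ^ (-θ) * s ^ (-θ) := by
      refine setIntegral_mono_on hInt1 hIrpow measurableSet_Ioc ?_
      intro s hs
      obtain ⟨hs0, hsε⟩ := hs
      have hTs0 : 0 < T * s := mul_pos hT0 hs0
      have hTsμ : T * s ≤ 1 / μ := by
        calc T * s ≤ T * ε := mul_le_mul_of_nonneg_left hsε hT0.le
          _ = δ * l := hTε
          _ ≤ 1 / μ := h2aμ
      have h1 : f (T * s) ≤ A₁ * (T * s) ^ (-θ) := hshort _ hTs0 hTsμ
      have h2 : (T * s) ^ (-θ) = T ^ (-θ) * s ^ (-θ) :=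
        Real.mul_rpow hT0.le hs0.le
      have h3 : Real.exp (-s) ≤ 1 := by
        rw [Real.exp_le_one_iff]; linarith
      have h4 : 0 < f (T * s) := hfpos _ hTs0
      calc Real.exp (-s) * f (T * s) ≤ 1 * f (T * s) :=
            mul_le_mul_of_nonneg_right h3 h4.le
        _ = f (T * s) := one_mul _
        _ ≤ A₁ * (T * s) ^ (-θ) := h1
        _ = A₁ * T ^ (-θ) * s ^ (-θ) := by rw [h2, mul_assoc]
    have hval1 : (∫ s in Set.Ioc (0:ℝ) ε, A₁ * T ^ (-θ) * s ^ (-θ)) =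
        A₁ * T ^ (-θ) * (ε ^ (-θ + 1) / (-θ + 1)) := by
      rw [← intervalIntegral.integral_of_le hε0.le,
        intervalIntegral.integral_const_mul,
        integral_rpow (Or.inl (by linarith : (-1:ℝ) < -θ))]
      rw [Real.zero_rpow (by linarith : (0:ℝ) < -θ + 1).ne']
      ring
    have hb1' : A₁ * T ^ (-θ) * (ε ^ (-θ + 1) / (-θ + 1)) ≤ B / 2 * l ^ (1 - θ) * T⁻¹ := by
      have hεpow : ε ^ (-θ + 1) = δ ^ (1 - θ) * l ^ (1 - θ) / T ^ (1 - θ) := by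
        have e1 : (-θ + 1 : ℝ) = 1 - θ := by ring
        rw [e1, hε_def, Real.div_rpow (mul_pos hδ0 hl0).le hT0.le,
          Real.mul_rpow hδ0.le hl0.le]
      have hTT : T ^ (-θ) / T ^ (1 - θ) = T⁻¹ := by
        rw [div_eq_mul_inv, ← Real.rpow_neg hT0.le, ← Real.rpow_add hT0,
          show (-θ + -(1 - θ) : ℝ) = -1 by ring, Real.rpow_neg_one]
      have hTpow1 : 0 < T ^ (1 - θ) := Real.rpow_pos_of_pos hT0 _
      have hexpr : A₁ * T ^ (-θ) * (ε ^ (-θ + 1) / (-θ + 1)) =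
          (A₁ * δ ^ (1 - θ) / (1 - θ)) * l ^ (1 - θ) * (T ^ (-θ) / T ^ (1 - θ)) := by
        rw [hεpow]
        have e2 : (-θ + 1 : ℝ) = 1 - θ := by ring
        rw [e2]
        field_simp
      rw [hexpr, hTT]
      have hcoef : A₁ * δ ^ (1 - θ) / (1 - θ) ≤ B / 2 := by
        rw [div_le_iff₀ hθ1']
        calc A₁ * δ ^ (1 - θ) ≤ (1 - θ) * B / 2 := hkey
          _ = B / 2 * (1 - θ) := by ring
      have hTinv : (0:ℝ) < T⁻¹ := inv_pos.mpr hT0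
      have h6 := mul_le_mul_of_nonneg_right hcoef (le_of_lt hlpow)
      exact mul_le_mul_of_nonneg_right h6 hTinv.le
    have hb2 : (∫ s in Set.Ioi ε, Real.exp (-s) * f (T * s)) ≤ f (δ * l) := by
      have hIexp : IntegrableOn (fun s : ℝ => Real.exp (-s) * f (δ * l))
          (Set.Ioi ε) volume := by
        have h := (exp_neg_integrableOn_Ioi ε (zero_lt_one)).mul_const (f (δ * l))
        simp only [neg_one_mul] at h; exact h
      have step : (∫ s in Set.Ioi ε, Real.exp (-s) * f (T * s)) ≤
          ∫ s in Set.Ioi ε, Real.exp (-s) * f (δ * l) := by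
        refine setIntegral_mono_on hInt2 hIexp measurableSet_Ioi ?_
        intro s hs
        have hsε : ε < s := hs
        have hmono : f (T * s) ≤ f (δ * l) := by
          refine hfmono _ _ (mul_pos hδ0 hl0) ?_
          calc δ * l = T * ε := hTε.symm
            _ ≤ T * s := mul_le_mul_of_nonneg_left hsε.le hT0.le
        exact mul_le_mul_of_nonneg_left hmono (Real.exp_nonneg _)
      have hval : (∫ s in Set.Ioi ε, Real.exp (-s) * f (δ * l)) =
          Real.exp (-ε) * f (δ * l) := by
        rw [MeasureTheory.integral_mul_const, integral_exp_neg_Ioi]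
      have hle : Real.exp (-ε) * f (δ * l) ≤ f (δ * l) := by
        have h5 : 0 < f (δ * l) := hfpos _ (mul_pos hδ0 hl0)
        have h6 : Real.exp (-ε) ≤ 1 := by
          rw [Real.exp_le_one_iff]; linarith
        calc Real.exp (-ε) * f (δ * l) ≤ 1 * f (δ * l) :=
              mul_le_mul_of_nonneg_right h6 h5.le
          _ = f (δ * l) := one_mul _
      rw [hval] at step
      linarith
    have hhint := hint
    rw [hsplit] at hhint
    have hp1 : (∫ s in Set.Ioc (0:ℝ) ε, Real.exp (-s) * f (T * s)) ≤
        B / 2 * l ^ (1 - θ) * T⁻¹ := le_trans hb1 (by rw [hval1]; exact hb1')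
    have hBl : B * l ^ (1 - θ) * T⁻¹ = m + B / 2 * l ^ (1 - θ) * T⁻¹ := by
      rw [hm_def]; ring
    rw [hBl] at hhint
    linarith
  -- Step 2: log-convexity transfer from δl to T
  set lam : ℝ := (T - 2 * a) / (T - a) with hlam_def
  have hTa : 0 < T - a := by linarith
  have h2a_eq : 2 * a = δ * l := by rw [ha_def]; ring
  have hT2a : 0 ≤ T - 2 * a := by rw [h2a_eq]; linarith
  have hlam0 : 0 ≤ lam := by rw [hlam_def]; exact div_nonneg hT2a hTa.le
  have hlam1 : lam ≤ 1 := by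
    rw [hlam_def, div_le_one hTa]; linarith
  have hrho_def : 1 - lam = a / (T - a) := by
    rw [hlam_def]; field_simp; ring
  have hρ0 : 0 < 1 - lam := by rw [hrho_def]; exact div_pos ha0 hTa
  have harg : lam * a + (1 - lam) * T = δ * l := by
    rw [hrho_def, hlam_def, ← h2a_eq]
    field_simp
    ring
  have hconv := hfconv a T ha0 hT0 lam hlam0 hlam1
  rw [harg] at hconv
  set M : ℝ := A₁ * a ^ (-θ) + 1 + B * μ with hM_def
  have hapow : 0 < a ^ (-θ) := Real.rpow_pos_of_pos ha0 _
  have hM1 : 1 ≤ M := by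
    rw [hM_def]; linarith [mul_pos hA₁ hapow, mul_pos hB hμ]
  have hM0 : 0 < M := lt_of_lt_of_le one_pos hM1
  have hfa : f a ≤ M := by
    rw [hM_def]
    have := hshort a ha0 haμ
    linarith [mul_pos hB hμ]
  have hfalam : f a ^ lam ≤ M := by
    calc f a ^ lam ≤ M ^ lam := Real.rpow_le_rpow (hfpos a ha0).le hfa hlam0
      _ ≤ M ^ (1:ℝ) := Real.rpow_le_rpow_of_exponent_le hM1 hlam1
      _ = M := Real.rpow_one M
  have hfT0 : 0 < f T := hfpos T hT0
  have hfTpow : 0 < f T ^ (1 - lam) := Real.rpow_pos_of_pos hfT0 _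
  have hchain : m / M ≤ f T ^ (1 - lam) := by
    rw [div_le_iff₀ hM0]
    calc m ≤ f (δ * l) := hstep1
      _ ≤ f a ^ lam * f T ^ (1 - lam) := hconv
      _ ≤ M * f T ^ (1 - lam) := mul_le_mul_of_nonneg_right hfalam hfTpow.le
      _ = f T ^ (1 - lam) * M := mul_comm _ _
  have hmM0 : 0 < m / M := div_pos hm0 hM0
  have hfT_lb : (m / M) ^ (1 / (1 - lam)) ≤ f T := by
    have h2 := Real.rpow_le_rpow hmM0.le hchain
      (one_div_nonneg.mpr hρ0.le)
    rwa [← Real.rpow_mul hfT0.le, mul_one_div, div_self hρ0.ne',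
      Real.rpow_one] at h2
  -- Step 3: the exponent estimate
  have hmM : m ≤ M := by
    rw [hm_def, hM_def]
    have h1 : B / 2 * l ^ (1 - θ) * T⁻¹ ≤ B / 2 * l ^ (1 - θ) * (μ / 2) := by
      have h0 : 0 ≤ B / 2 * l ^ (1 - θ) := by positivity
      exact mul_le_mul_of_nonneg_left hTμ h0
    have h2 : B / 2 * l ^ (1 - θ) * (μ / 2) ≤ B / 2 * 1 * (μ / 2) :=
      mul_le_mul_of_nonneg_right
        (mul_le_mul_of_nonneg_left hlpow1 (by linarith : (0:ℝ) ≤ B / 2))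
        (by linarith : (0:ℝ) ≤ μ / 2)
    linarith [mul_pos hA₁ hapow, mul_pos hB hμ]
  have hlogMm0 : 0 ≤ Real.log M - Real.log m := by
    have := Real.log_le_log hm0 hmM
    linarith
  have hinv_rho : 1 / (1 - lam) ≤ (2 / δ) * x := by
    rw [hrho_def, one_div_div, div_le_iff₀ ha0]
    have e : (2 / δ) * x * a = T := by
      rw [ha_def, hx_def]
      field_simp
    rw [e]; linarith
  have hxq1 : 1 ≤ x ^ q := Real.one_le_rpow hx1 hq0.le
  have hxq0 : 0 < x ^ q := Real.rpow_pos_of_pos hx0 _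
  -- upper bound for log M
  have hlogM : Real.log M ≤ Real.log (K₁ * K₂) + Real.log x := by
    have hl_negθ : (1:ℝ) ≤ l ^ (-θ) :=
      Real.one_le_rpow_of_pos_of_le_one_of_nonpos hl0 hl1 (by linarith)
    have hapow_eq : a ^ (-θ) = (δ / 2) ^ (-θ) * l ^ (-θ) := by
      rw [ha_def, show δ * l / 2 = (δ / 2) * l by ring,
        Real.mul_rpow hδ2.le hl0.le]
    have hM_le1 : M ≤ K₁ * l ^ (-θ) := by
      rw [hM_def, hK₁_def, hapow_eq]
      have hh := mul_le_mul_of_nonneg_left hl_negθ (mul_pos hB hμ).le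
      linarith [hh, hl_negθ]
    have hlx : l ^ (-θ) ≤ K₂ * x := by
      have hTθ : (0:ℝ) < T ^ θ := Real.rpow_pos_of_pos hT0 _
      have hlθ : (0:ℝ) < l ^ θ := Real.rpow_pos_of_pos hl0 _
      have e1 : l ^ (-θ) = x ^ θ * T ^ (-θ) := by
        rw [hx_def, Real.div_rpow hT0.le hl0.le, Real.rpow_neg hT0.le,
          Real.rpow_neg hl0.le]
        field_simp
      have e2 : x ^ θ ≤ x := by
        calc x ^ θ ≤ x ^ (1:ℝ) := Real.rpow_le_rpow_of_exponent_le hx1 hθ1.le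
          _ = x := Real.rpow_one x
      have e3 : T ^ (-θ) ≤ K₂ := by
        have e4 : T ^ (-θ) = (T⁻¹) ^ θ := by
          rw [Real.inv_rpow hT0.le, ← Real.rpow_neg hT0.le]
        rw [hK₂_def]
        calc T ^ (-θ) = (T⁻¹) ^ θ := e4
          _ ≤ (μ / 2) ^ θ := Real.rpow_le_rpow (inv_pos.mpr hT0).le hTμ hθ0.le
          _ ≤ max 1 ((μ / 2) ^ θ) := le_max_right _ _
      calc l ^ (-θ) = x ^ θ * T ^ (-θ) := e1
        _ ≤ x * K₂ := mul_le_mul e2 e3 (Real.rpow_pos_of_pos hT0 _).le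
            (by linarith)
        _ = K₂ * x := mul_comm _ _
    have hM_le : M ≤ K₁ * K₂ * x := by
      calc M ≤ K₁ * l ^ (-θ) := hM_le1
        _ ≤ K₁ * (K₂ * x) := mul_le_mul_of_nonneg_left hlx hK₁0.le
        _ = K₁ * K₂ * x := by ring
    calc Real.log M ≤ Real.log (K₁ * K₂ * x) := Real.log_le_log hM0 hM_le
      _ = Real.log (K₁ * K₂) + Real.log x :=
          Real.log_mul (mul_pos hK₁0 hK₂0).ne' hx0.ne'
  -- upper bound for -log m
  have hlogm : -Real.log m ≤ Real.log (2 / B) + Real.log x := by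
    have hlθ1 : l ^ θ ≤ 1 := Real.rpow_le_one hl0.le hl1 hθ0.le
    have hlθ0 : 0 < l ^ θ := Real.rpow_pos_of_pos hl0 _
    have hminv : m⁻¹ = (2 / B) * x * l ^ θ := by
      have hsplit : l ^ (1 - θ) = l * (l ^ θ)⁻¹ := by
        have e : (1 - θ : ℝ) = 1 + (-θ) := by ring
        rw [e, Real.rpow_add hl0, Real.rpow_one, Real.rpow_neg hl0.le]
      rw [hm_def, hx_def, hsplit]
      field_simp
    have hminv_le : m⁻¹ ≤ (2 / B) * x := by
      rw [hminv]
      have h1 : 0 ≤ (2 / B) * x := by positivity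
      calc (2 / B) * x * l ^ θ ≤ (2 / B) * x * 1 :=
            mul_le_mul_of_nonneg_left hlθ1 h1
        _ = (2 / B) * x := mul_one _
    calc -Real.log m = Real.log m⁻¹ := (Real.log_inv m).symm
      _ ≤ Real.log ((2 / B) * x) := Real.log_le_log (inv_pos.mpr hm0) hminv_le
      _ = Real.log (2 / B) + Real.log x := Real.log_mul (by positivity) hx0.ne'
  -- log x ≤ (1/q) x^q
  have hlogx : Real.log x ≤ (1 / q) * x ^ q := by
    have h := Real.log_le_sub_one_of_pos hxq0
    rw [Real.log_rpow hx0] at h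
    have h2 : q * Real.log x ≤ x ^ q := by linarith
    rw [one_div, inv_mul_eq_div, le_div_iff₀ hq0]
    linarith [h2]
  -- assemble: (log M - log m) ≤ (|log K| + 2/q) x^q
  have hlogsum : Real.log M - Real.log m ≤ (|Real.log K| + 2 / q) * x ^ q := by
    have hKsplit : Real.log (K₁ * K₂) + Real.log (2 / B) = Real.log K := by
      rw [hK_def, Real.log_mul (mul_pos hK₁0 hK₂0).ne' (by positivity)]
    have habs : Real.log K ≤ |Real.log K| := le_abs_self _
    have e1 : |Real.log K| ≤ |Real.log K| * x ^ q :=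
      le_mul_of_one_le_right (abs_nonneg _) hxq1
    have e2 : 2 * Real.log x ≤ (2 / q) * x ^ q := by
      have h3 : 2 * ((1 / q) * x ^ q) = (2 / q) * x ^ q := by ring
      linarith
    have expand : (|Real.log K| + 2 / q) * x ^ q =
        |Real.log K| * x ^ q + (2 / q) * x ^ q := by ring
    rw [expand]
    linarith
  -- the master exponent inequality
  have hq1 : q + 1 = 1 / (1 - θ) := by
    rw [hq_def]; field_simp; ring
  have hxqx : x ^ q * x = x ^ (1 / (1 - θ)) := by
    calc x ^ q * x = x ^ q * x ^ (1:ℝ) := by rw [Real.rpow_one]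
      _ = x ^ (q + 1) := (Real.rpow_add hx0 _ _).symm
      _ = x ^ (1 / (1 - θ)) := by rw [hq1]
  have hxp0 : 0 ≤ x ^ (1 / (1 - θ)) := (Real.rpow_pos_of_pos hx0 _).le
  have hmaster : (Real.log M - Real.log m) * (1 / (1 - lam)) ≤
      C * x ^ (1 / (1 - θ)) := by
    have h1 : (Real.log M - Real.log m) * (1 / (1 - lam)) ≤
        ((|Real.log K| + 2 / q) * x ^ q) * ((2 / δ) * x) := by
      refine mul_le_mul hlogsum hinv_rho (one_div_nonneg.mpr hρ0.le) ?_
      have : 0 ≤ |Real.log K| + 2 / q := by positivity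
      positivity
    have h2 : ((|Real.log K| + 2 / q) * x ^ q) * ((2 / δ) * x) =
        ((2 / δ) * (|Real.log K| + 2 / q)) * (x ^ q * x) := by ring
    have h3 : (2 / δ) * (|Real.log K| + 2 / q) ≤ C := by
      rw [hC_def]
      have h4 : 0 < 2 / δ := by positivity
      have h5 : |Real.log K| + 2 / q ≤ |Real.log K| + 2 / q + 1 := by linarith
      exact mul_le_mul_of_nonneg_left h5 h4.le
    calc (Real.log M - Real.log m) * (1 / (1 - lam)) ≤
          ((2 / δ) * (|Real.log K| + 2 / q)) * (x ^ q * x) := by rw [← h2]; exact h1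
      _ = ((2 / δ) * (|Real.log K| + 2 / q)) * x ^ (1 / (1 - θ)) := by rw [hxqx]
      _ ≤ C * x ^ (1 / (1 - θ)) := mul_le_mul_of_nonneg_right h3 hxp0
  -- finish
  have hrpow_exp : (m / M) ^ (1 / (1 - lam)) =
      Real.exp (Real.log (m / M) * (1 / (1 - lam))) :=
    Real.rpow_def_of_pos hmM0 _
  have hfinal : -C * x ^ (1 / (1 - θ)) ≤ Real.log (m / M) * (1 / (1 - lam)) := by
    have hlogdiv : Real.log (m / M) = -(Real.log M - Real.log m) := by
      rw [Real.log_div hm0.ne' hM0.ne']; ring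
    rw [hlogdiv, neg_mul, neg_mul, neg_le_neg_iff]
    exact hmaster
  have hchain2 : Real.exp (-C * x ^ (1 / (1 - θ))) ≤ f T := by
    calc Real.exp (-C * x ^ (1 / (1 - θ))) ≤
        Real.exp (Real.log (m / M) * (1 / (1 - lam))) := Real.exp_le_exp.mpr hfinal
      _ = (m / M) ^ (1 / (1 - lam)) := hrpow_exp.symm
      _ ≤ f T := hfT_lb
  have hfact1 : Real.exp (-μ * T) ≤ 1 := by
    rw [Real.exp_le_one_iff]
    linarith [mul_pos hμ hT0]
  have hexp_pos : 0 < Real.exp (-C * x ^ (1 / (1 - θ))) := Real.exp_pos _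
  calc 1 * l ^ (1 - θ) * Real.exp (-μ * T) * Real.exp (-C * x ^ (1 / (1 - θ))) ≤
      1 * Real.exp (-C * x ^ (1 / (1 - θ))) := by
        have h1 : l ^ (1 - θ) * Real.exp (-μ * T) ≤ 1 * 1 :=
          mul_le_mul hlpow1 hfact1 (Real.exp_nonneg _) zero_le_one
        have h2 : 1 * l ^ (1 - θ) * Real.exp (-μ * T) ≤ 1 := by
          rw [one_mul]; linarith
        exact mul_le_mul_of_nonneg_right h2 hexp_pos.le
    _ = Real.exp (-C * x ^ (1 / (1 - θ))) := by ring
    _ ≤ f T := hchain2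
end
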